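/- Let X = ∏_{i=1}^∞ A_i, where A_i = ℤ_2 for i even and A_i = ℤ_{2i} for i odd, with the product topology, and let f : X → X be the odometer (+1 map with carryover). Let μ be the product measure determined by μ_i(0)=μ_i(1)=1/2 for i even, and for i odd μ_i(j) = (1−2^{−i})/i for 0 ≤ j ≤ i−1 and μ_i(j) = 2^{−i}/i for i ≤ j ≤ 2i−1. Then for every basic cylinder C = [a₁,…,a_i], setting N = |A₁|·|A₂|⋯|A_i|, one has f^{−N}(C) = C, and hence the indicator χ_C is a periodic point of the composition operator T_f on L^p(X); consequently T_f has a dense set of periodic points. -/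

import Mathlib

open MeasureTheory Set Filter
open scoped ENNReal NNReal

/-- The image of a set under the `n`-th power (`n ∈ ℤ`) of a bijection `f`. -/
def zimg {X : Type*} (f : X → X) (n : ℤ) (B : Set X) : Set X :=
  if 0 ≤ n then f^[n.toNat] '' B else f^[(-n).toNat] ⁻¹' B

/-- `W` is a wandering set for `f`: the sets `fⁿ(W)`, `n ∈ ℤ`, are pairwise disjoint. -/
def Wandering {X : Type*} (f : X → X) (W : Set X) : Prop :=
  Pairwise fun m n : ℤ => Disjoint (zimg f m W) (zimg f n W)

/-- `W` generates `X`: `X = ⋃_{n ∈ ℤ} fⁿ(W)`. -/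
def GeneratedBy {X : Type*} (f : X → X) (W : Set X) : Prop :=
  (⋃ n : ℤ, zimg f n W) = Set.univ

/-- The Summability Condition (SC). -/
def SCcond {X : Type*} [MeasurableSpace X] (μ : Measure X) (f : X → X) : Prop :=
  ∀ ε : ℝ≥0∞, 0 < ε → ∀ B : Set X, MeasurableSet B → μ B < ⊤ →
    ∃ B' : Set X, B' ⊆ B ∧ MeasurableSet B' ∧ μ (B \ B') < ε ∧
      ∑' n : ℤ, μ (zimg f n B') ≠ ⊤

/-- A measurable system: `μ` σ-finite with `μ(X) > 0`, `f` bijective, bimeasurable,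
nonsingular, and `μ(f⁻¹(B)) ≤ c·μ(B)` with `0 < c < ∞`. -/
def MeasSystem {X : Type*} [MeasurableSpace X] (μ : Measure X) (f : X → X) (c : ℝ≥0∞) : Prop :=
  SigmaFinite μ ∧ 0 < μ Set.univ ∧ Function.Bijective f ∧ Measurable f ∧
  (∀ B : Set X, MeasurableSet B → MeasurableSet (f '' B)) ∧
  (∀ B : Set X, MeasurableSet B → (μ (f ⁻¹' B) = 0 ↔ μ B = 0)) ∧
  0 < c ∧ c ≠ ⊤ ∧ (∀ B : Set X, MeasurableSet B → μ (f ⁻¹' B) ≤ c * μ B)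

/-- `f` is dissipative: there is a generating wandering set. -/
def Dissipative {X : Type*} [MeasurableSpace X] (f : X → X) : Prop :=
  ∃ W : Set X, MeasurableSet W ∧ Wandering f W ∧ GeneratedBy f W

/-- A set of natural numbers has positive lower density. -/
def PosLowerDensity (A : Set ℕ) : Prop :=
  0 < Filter.liminf (fun N : ℕ => ((A ∩ Set.Icc 1 N).ncard : ℝ) / N) Filter.atTop

/-- `x` is a recurrent point of `f`. -/
def Recurrent {X : Type*} [TopologicalSpace X] (f : X → X) (x : X) : Prop :=
  ∀ U : Set X, IsOpen U → x ∈ U → ∃ n : ℕ, 1 ≤ n ∧ f^[n] x ∈ U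

/-- A continuous linear operator is frequently hypercyclic. -/
def FreqHC {E : Type*} [NormedAddCommGroup E] [NormedSpace ℝ E] (T : E →L[ℝ] E) : Prop :=
  ∃ φ : E, ∀ U : Set E, IsOpen U → U.Nonempty → PosLowerDensity {n : ℕ | (T ^ n) φ ∈ U}

/-- `d(W) = ‖dμ/dν |_W‖_∞⁻¹`, with the convention `1/∞ = 0`. -/
noncomputable def dSeq {X : Type*} [MeasurableSpace X] (μ ν : Measure X) (W : Set X) : ℝ≥0∞ :=
  (essSup (μ.rnDeriv ν) (μ.restrict W))⁻¹

/-- The size of the `i`-th digit set (0-based `i`, paper index `i+1`):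
`|A_j| = 2` for `j` even, `|A_j| = 2j` for `j` odd. -/
def odoSize (i : ℕ) : ℕ := (if (i + 1) % 2 = 0 then 1 else 2 * i + 1) + 1

instance (i : ℕ) : NeZero (odoSize i) := ⟨Nat.succ_ne_zero _⟩

/-- The odometer space `X = ∏ A_i`. -/
abbrev OdoX : Type := ∀ i : ℕ, Fin (odoSize i)

-- The odometer (+1 with carryover): add 1 at position `i` iff all previous digits
-- are maximal.
open scoped Classical in
noncomputable def odoMap : OdoX → OdoX := fun x i =>
  if ∀ j, j < i → ((x j : ℕ) = odoSize j - 1) then x i + 1 else x i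

/-- The weight of digit `k` at coordinate `i` (paper index `j = i+1`):
`1/2` for `j` even; for `j` odd, `(1−2^{−j})/j` for digits `< j` and `2^{−j}/j`
for digits `≥ j`. -/
noncomputable def odoW (i : ℕ) (k : Fin (odoSize i)) : ℝ≥0∞ :=
  if (i + 1) % 2 = 0 then 1 / 2
  else if (k : ℕ) < i + 1 then (1 - (2 : ℝ≥0∞)⁻¹ ^ (i + 1)) / (i + 1)
  else (2 : ℝ≥0∞)⁻¹ ^ (i + 1) / (i + 1)

open scoped symmDiff

namespace Odo19

lemma two_le_odoSize (i : ℕ) : 2 ≤ odoSize i := by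
  unfold odoSize; split <;> omega

/-- Mixed-radix base: product of the first `n` digit sizes. -/
def P (n : ℕ) : ℕ := ∏ j ∈ Finset.range n, odoSize j

lemma P_zero : P 0 = 1 := rfl
lemma P_succ (n : ℕ) : P (n + 1) = P n * odoSize n := Finset.prod_range_succ _ _
lemma P_pos (n : ℕ) : 0 < P n :=
  Finset.prod_pos fun j _ => by have := two_le_odoSize j; omega

/-- Mixed-radix valuation of the first `n` digits. -/
def v (n : ℕ) (x : OdoX) : ℕ := ∑ j ∈ Finset.range n, (x j : ℕ) * P j

lemma v_zero (x : OdoX) : v 0 x = 0 := rfl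
lemma v_succ (n : ℕ) (x : OdoX) : v (n + 1) x = v n x + (x n : ℕ) * P n :=
  Finset.sum_range_succ _ _

lemma v_lt (n : ℕ) (x : OdoX) : v n x < P n := by
  induction n with
  | zero => simp [v_zero, P_zero]
  | succ n ih =>
    rw [v_succ, P_succ]
    have h1 : (x n : ℕ) * P n ≤ (odoSize n - 1) * P n :=
      Nat.mul_le_mul_right _ (by have := (x n).isLt; omega)
    have key : (odoSize n - 1) * P n + P n = odoSize n * P n := by
      have h2 := two_le_odoSize n
      calc (odoSize n - 1) * P n + P n = ((odoSize n - 1) + 1) * P n := by ring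
        _ = odoSize n * P n := by rw [Nat.sub_add_cancel (by omega)]
    have hcomm : P n * odoSize n = odoSize n * P n := Nat.mul_comm _ _
    omega

lemma v_congr {n : ℕ} {x y : OdoX} (h : ∀ j, j < n → x j = y j) : v n x = v n y :=
  Finset.sum_congr rfl fun j hj => by rw [h j (Finset.mem_range.mp hj)]

lemma add_mul_inj {a b c d M : ℕ} (hM : 0 < M) (ha : a < M) (hb : b < M)
    (h : a + c * M = b + d * M) : a = b ∧ c = d := by
  have h1 : (a + c * M) % M = a := by rw [Nat.add_mul_mod_self_right, Nat.mod_eq_of_lt ha]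
  have h2 : (b + d * M) % M = b := by rw [Nat.add_mul_mod_self_right, Nat.mod_eq_of_lt hb]
  have hab : a = b := by rw [← h1, h, h2]
  refine ⟨hab, ?_⟩
  subst hab
  exact Nat.eq_of_mul_eq_mul_right hM (by omega)

lemma digits_of_v : ∀ (n : ℕ) {x y : OdoX}, v n x = v n y → ∀ j, j < n → x j = y j := by
  intro n
  induction n with
  | zero => intro x y _ j hj; omega
  | succ n ih =>
    intro x y h j hj
    rw [v_succ, v_succ] at h
    obtain ⟨h1, h2⟩ := add_mul_inj (P_pos n) (v_lt n x) (v_lt n y) h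
    rcases Nat.lt_succ_iff_lt_or_eq.mp hj with hj' | rfl
    · exact ih h1 j hj'
    · exact Fin.val_injective h2

lemma val_add_one (j : ℕ) (a : Fin (odoSize j)) :
    (((a + 1) : Fin (odoSize j)) : ℕ) = ((a : ℕ) + 1) % odoSize j := by
  have h2 := two_le_odoSize j
  rw [Fin.val_add, Fin.val_one']
  rw [Nat.mod_eq_of_lt (a := 1) (by omega)]

lemma odoMap_apply_pos {x : OdoX} {i : ℕ} (h : ∀ j, j < i → ((x j : ℕ) = odoSize j - 1)) :
    odoMap x i = x i + 1 := by
  unfold odoMap; exact if_pos h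

lemma odoMap_apply_neg {x : OdoX} {i : ℕ} (h : ¬ ∀ j, j < i → ((x j : ℕ) = odoSize j - 1)) :
    odoMap x i = x i := by
  unfold odoMap; exact if_neg h

lemma v_max (n : ℕ) (x : OdoX) (h : ∀ j, j < n → (x j : ℕ) = odoSize j - 1) :
    v n x = P n - 1 := by
  induction n with
  | zero => rfl
  | succ n ih =>
    rw [v_succ, P_succ, ih (fun j hj => h j (by omega)), h n (by omega)]
    have hp := P_pos n
    have key : (odoSize n - 1) * P n + P n = odoSize n * P n := by
      have h2 := two_le_odoSize n
      calc (odoSize n - 1) * P n + P n = ((odoSize n - 1) + 1) * P n := by ring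
        _ = odoSize n * P n := by rw [Nat.sub_add_cancel (by omega)]
    have hcomm : P n * odoSize n = odoSize n * P n := Nat.mul_comm _ _
    omega

lemma exists_min_nonmax {x : OdoX} {n : ℕ}
    (h : ¬ ∀ j, j < n → (x j : ℕ) = odoSize j - 1) :
    ∃ i0, i0 < n ∧ (x i0 : ℕ) ≠ odoSize i0 - 1 ∧
      ∀ m, m < i0 → (x m : ℕ) = odoSize m - 1 := by
  push_neg at h
  obtain ⟨j0, hj0, hj0'⟩ := h
  have hex : ∃ j, j < n ∧ (x j : ℕ) ≠ odoSize j - 1 := ⟨j0, hj0, hj0'⟩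
  classical
  refine ⟨Nat.find hex, (Nat.find_spec hex).1, (Nat.find_spec hex).2, fun m hm => ?_⟩
  have := Nat.find_min hex hm
  push_neg at this
  exact this (hm.trans (Nat.find_spec hex).1)

section MinFacts

variable {x : OdoX} {i0 : ℕ}

lemma odoMap_val_lt (hmin : ∀ m, m < i0 → (x m : ℕ) = odoSize m - 1)
    {j : ℕ} (hj : j < i0) : ((odoMap x j : ℕ)) = 0 := by
  rw [odoMap_apply_pos (fun k hk => hmin k (hk.trans hj)), val_add_one]
  have h := hmin j hj
  have h2 := two_le_odoSize j
  rw [h, Nat.sub_add_cancel (by omega), Nat.mod_self]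

lemma odoMap_val_at (hne : (x i0 : ℕ) ≠ odoSize i0 - 1)
    (hmin : ∀ m, m < i0 → (x m : ℕ) = odoSize m - 1) :
    ((odoMap x i0 : ℕ)) = (x i0 : ℕ) + 1 := by
  rw [odoMap_apply_pos hmin, val_add_one]
  have := (x i0).isLt
  exact Nat.mod_eq_of_lt (by omega)

lemma odoMap_eq_gt (hne : (x i0 : ℕ) ≠ odoSize i0 - 1) {j : ℕ} (hj : i0 < j) :
    odoMap x j = x j :=
  odoMap_apply_neg (fun h => hne (h i0 hj))

end MinFacts

lemma v_step (n : ℕ) (x : OdoX) : v n (odoMap x) = (v n x + 1) % P n := by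
  by_cases hall : ∀ j, j < n → (x j : ℕ) = odoSize j - 1
  · have hmax : v n x = P n - 1 := v_max n x hall
    have h0 : ∀ j, j < n → ((odoMap x j : ℕ)) = 0 := by
      intro j hj
      rw [odoMap_apply_pos (fun k hk => hall k (hk.trans hj)), val_add_one]
      have h := hall j hj
      have h2 := two_le_odoSize j
      rw [h, Nat.sub_add_cancel (by omega), Nat.mod_self]
    have hz : v n (odoMap x) = 0 :=
      Finset.sum_eq_zero fun j hj => by rw [h0 j (Finset.mem_range.mp hj), zero_mul]
    have := P_pos n
    rw [hz, hmax, Nat.sub_add_cancel (by omega), Nat.mod_self]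
  · obtain ⟨i0, hi0n, hne, hmin⟩ := exists_min_nonmax hall
    have split : ∀ z : OdoX, v n z =
        (∑ j ∈ Finset.range i0, (z j : ℕ) * P j) + (z i0 : ℕ) * P i0 +
          ∑ j ∈ Finset.Ico (i0 + 1) n, (z j : ℕ) * P j := by
      intro z
      rw [v, Finset.range_eq_Ico,
        ← Finset.sum_Ico_consecutive (fun j => (z j : ℕ) * P j) (Nat.zero_le (i0 + 1))
          (by omega : i0 + 1 ≤ n),
        ← Finset.range_eq_Ico, Finset.sum_range_succ]
    have geo : ∑ j ∈ Finset.range i0, ((x j : ℕ)) * P j = P i0 - 1 := v_max i0 x hmin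
    have hIcoEq : ∑ j ∈ Finset.Ico (i0 + 1) n, ((odoMap x j : ℕ)) * P j
        = ∑ j ∈ Finset.Ico (i0 + 1) n, ((x j : ℕ)) * P j :=
      Finset.sum_congr rfl fun j hj => by
        rw [odoMap_eq_gt hne (Finset.mem_Ico.mp hj).1]
    have h0sum : ∑ j ∈ Finset.range i0, ((odoMap x j : ℕ)) * P j = 0 :=
      Finset.sum_eq_zero fun j hj => by
        rw [odoMap_val_lt hmin (Finset.mem_range.mp hj), zero_mul]
    have key : v n (odoMap x) = v n x + 1 := by
      rw [split (odoMap x), split x, h0sum, hIcoEq, odoMap_val_at hne hmin, geo]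
      have hp := P_pos i0
      have hmul : ((x i0 : ℕ) + 1) * P i0 = (x i0 : ℕ) * P i0 + P i0 := by ring
      omega
    have hlt : v n x + 1 < P n := key ▸ v_lt n (odoMap x)
    rw [key, Nat.mod_eq_of_lt hlt]

lemma v_iter (n k : ℕ) (x : OdoX) : v n (odoMap^[k] x) = (v n x + k) % P n := by
  induction k with
  | zero => simp [Nat.mod_eq_of_lt (v_lt n x)]
  | succ k ih =>
    rw [Function.iterate_succ_apply', v_step, ih, Nat.mod_add_mod, ← add_assoc]

lemma digits_iter_P (n : ℕ) (x : OdoX) : ∀ j, j < n → odoMap^[P n] x j = x j := by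
  apply digits_of_v
  rw [v_iter, Nat.add_mod_right, Nat.mod_eq_of_lt (v_lt n x)]

noncomputable def digitsPoint (t : ℕ) : OdoX := fun j =>
  ⟨(t / P j) % odoSize j, Nat.mod_lt _ (by have := two_le_odoSize j; omega)⟩

lemma v_digitsPoint (n t : ℕ) : v n (digitsPoint t) = t % P n := by
  induction n with
  | zero => simp [v_zero, P_zero, Nat.mod_one]
  | succ n ih =>
    rw [v_succ, ih, P_succ]
    show t % P n + (t / P n % odoSize n) * P n = t % (P n * odoSize n)
    rw [Nat.mod_mul]
    ring

lemma mod_plus_pred {Pn : ℕ} (hP : 0 < Pn) {w : ℕ} (hw : w < Pn) :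
    ((w + 1) % Pn + (Pn - 1)) % Pn = w := by
  rw [Nat.mod_add_mod, (by omega : w + 1 + (Pn - 1) = w + Pn), Nat.add_mod_right,
    Nat.mod_eq_of_lt hw]

lemma mod_succ_inj {Pn : ℕ} (hP : 0 < Pn) {u u' : ℕ} (hu : u < Pn) (hu' : u' < Pn)
    (h : (u + 1) % Pn = (u' + 1) % Pn) : u = u' := by
  rw [← mod_plus_pred hP hu, h, mod_plus_pred hP hu']

lemma mod_pred_succ {Pn : ℕ} (hP : 0 < Pn) {V : ℕ} (hV : V < Pn) :
    ((V + (Pn - 1)) % Pn + 1) % Pn = V := by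
  rw [Nat.mod_add_mod, (by omega : V + (Pn - 1) + 1 = V + Pn), Nat.add_mod_right,
    Nat.mod_eq_of_lt hV]


/-! ### Cylinders -/

abbrev Tup (n : ℕ) := ∀ j : Fin n, Fin (odoSize j)

def proj (n : ℕ) : OdoX → Tup n := fun x j => x j

/-- Sets determined by the first `n` coordinates. -/
def cylSet (n : ℕ) (S : Set (Tup n)) : Set OdoX := proj n ⁻¹' S

lemma proj_eq_iff {n : ℕ} {x y : OdoX} : proj n x = proj n y ↔ ∀ j, j < n → x j = y j := by
  constructor
  · intro h j hj
    exact congrFun h ⟨j, hj⟩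
  · intro h
    funext j
    exact h j j.isLt

lemma proj_eq_iff_v_eq {n : ℕ} {x y : OdoX} : proj n x = proj n y ↔ v n x = v n y := by
  rw [proj_eq_iff]
  exact ⟨fun h => v_congr h, fun h => digits_of_v n h⟩

def extPt (n : ℕ) (a : Tup n) : OdoX := fun i => if h : i < n then a ⟨i, h⟩ else 0

lemma proj_extPt (n : ℕ) (a : Tup n) : proj n (extPt n a) = a := by
  funext j
  show extPt n a j = a j
  rw [extPt, dif_pos j.isLt]

lemma mem_cylSet_singleton {n : ℕ} {a : Tup n} {x : OdoX} :
    x ∈ cylSet n {a} ↔ proj n x = a := Iff.rfl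

lemma setOf_eq_cylSet (n : ℕ) (a : Tup n) :
    {x : OdoX | ∀ j : Fin n, x j = a j} = cylSet n {a} := by
  ext x
  simp only [mem_setOf_eq, mem_cylSet_singleton, funext_iff]
  exact Iff.rfl

lemma proj_iter_P (n : ℕ) (x : OdoX) : proj n (odoMap^[P n] x) = proj n x :=
  proj_eq_iff.mpr (digits_iter_P n x)

lemma preimage_iter_P (n : ℕ) (S : Set (Tup n)) :
    odoMap^[P n] ⁻¹' (cylSet n S) = cylSet n S := by
  ext x
  simp only [cylSet, mem_preimage, proj_iter_P]

/-- The odoMap-preimage of a basic cylinder is a basic cylinder, witnessed by a point. -/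
lemma preimage_cyl (n : ℕ) (a : Tup n) :
    ∃ z : OdoX, proj n (odoMap z) = a ∧
      odoMap ⁻¹' (cylSet n {a}) = cylSet n {proj n z} := by
  classical
  have hP := P_pos n
  set V := v n (extPt n a) with hV
  have hVlt : V < P n := v_lt n _
  set W := (V + (P n - 1)) % P n with hW
  have hWlt : W < P n := Nat.mod_lt _ hP
  refine ⟨digitsPoint W, ?_, ?_⟩
  · have hvz : v n (digitsPoint W) = W := by rw [v_digitsPoint, Nat.mod_eq_of_lt hWlt]
    have hvfz : v n (odoMap (digitsPoint W)) = V := by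
      rw [v_step, hvz, hW, mod_pred_succ hP hVlt]
    have : proj n (odoMap (digitsPoint W)) = proj n (extPt n a) :=
      proj_eq_iff_v_eq.mpr (by rw [hvfz])
    rw [this, proj_extPt]
  · ext x
    have hvz : v n (digitsPoint W) = W := by rw [v_digitsPoint, Nat.mod_eq_of_lt hWlt]
    simp only [mem_preimage, mem_cylSet_singleton]
    constructor
    · intro h
      have hv : (v n x + 1) % P n = V := by
        rw [← v_step]
        exact proj_eq_iff_v_eq.mp (by rw [h, proj_extPt])
      apply proj_eq_iff_v_eq.mpr
      rw [hvz, hW, ← hv]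
      exact (mod_plus_pred hP (v_lt n x)).symm
    · intro h
      have hvx : v n x = W := by rw [proj_eq_iff_v_eq.mp h, hvz]
      have hfx : v n (odoMap x) = V := by rw [v_step, hvx, hW, mod_pred_succ hP hVlt]
      rw [← proj_extPt n a]
      exact proj_eq_iff_v_eq.mpr (by rw [hfx])

/-! ### Weight estimates -/

lemma q_le_one : (2 : ℝ≥0∞)⁻¹ ≤ 1 := by simp

lemma q_pow_le_q {m : ℕ} (hm : 1 ≤ m) : (2 : ℝ≥0∞)⁻¹ ^ m ≤ 2⁻¹ := by
  calc (2 : ℝ≥0∞)⁻¹ ^ m ≤ 2⁻¹ ^ 1 := pow_le_pow_of_le_one zero_le q_le_one hm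
    _ = 2⁻¹ := pow_one _

lemma half_le_one_sub_q_pow {m : ℕ} (hm : 1 ≤ m) : (2 : ℝ≥0∞)⁻¹ ≤ 1 - 2⁻¹ ^ m := by
  calc (2 : ℝ≥0∞)⁻¹ = 1 - 2⁻¹ := ENNReal.one_sub_inv_two.symm
    _ ≤ 1 - 2⁻¹ ^ m := tsub_le_tsub_left (q_pow_le_q hm) 1

lemma odoW_even {j : ℕ} (h : (j + 1) % 2 = 0) (k : Fin (odoSize j)) : odoW j k = 1 / 2 := by
  unfold odoW; rw [if_pos h]

lemma odoW_odd_lt {j : ℕ} (h : ¬(j + 1) % 2 = 0) {k : Fin (odoSize j)} (hk : (k : ℕ) < j + 1) :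
    odoW j k = (1 - (2 : ℝ≥0∞)⁻¹ ^ (j + 1)) / (j + 1) := by
  unfold odoW; rw [if_neg h, if_pos hk]

lemma odoW_odd_ge {j : ℕ} (h : ¬(j + 1) % 2 = 0) {k : Fin (odoSize j)} (hk : ¬((k : ℕ) < j + 1)) :
    odoW j k = (2 : ℝ≥0∞)⁻¹ ^ (j + 1) / (j + 1) := by
  unfold odoW; rw [if_neg h, if_neg hk]

lemma w_max_le_w0 (j : ℕ) {a b : Fin (odoSize j)} (ha : (a : ℕ) = odoSize j - 1)
    (hb : (b : ℕ) = 0) : odoW j a ≤ odoW j b := by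
  by_cases h : (j + 1) % 2 = 0
  · rw [odoW_even h, odoW_even h]
  · have hsize : odoSize j = 2 * j + 2 := by unfold odoSize; rw [if_neg h]
    have hage : ¬((a : ℕ) < j + 1) := by omega
    have hblt : (b : ℕ) < j + 1 := by omega
    rw [odoW_odd_ge h hage, odoW_odd_lt h hblt]
    exact ENNReal.div_le_div ((q_pow_le_q (by omega)).trans (half_le_one_sub_q_pow (by omega)))
      le_rfl

lemma four_q_sq : (4 : ℝ≥0∞) * 2⁻¹ ^ 2 = 1 := by
  rw [sq, ← mul_assoc, show (4:ℝ≥0∞) * 2⁻¹ = 2 * (2 * 2⁻¹) by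
    rw [← mul_assoc]; norm_num]
  rw [ENNReal.mul_inv_cancel (by norm_num) (by norm_num),
    mul_one, ENNReal.mul_inv_cancel (by norm_num) (by norm_num)]

lemma eight_half : (8 : ℝ≥0∞) * 2⁻¹ = 4 := by
  rw [show (8:ℝ≥0∞) = 4 * 2 by norm_num, mul_assoc,
    ENNReal.mul_inv_cancel (by norm_num) (by norm_num), mul_one]

lemma cross_num (e : ℕ) (he : 1 ≤ e) :
    (1 - (2 : ℝ≥0∞)⁻¹ ^ (e + 2)) * 2⁻¹ ^ e ≤ 8 * (2⁻¹ ^ (e + 2) * (1 - 2⁻¹ ^ e)) := by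
  have step1 : (1 - (2 : ℝ≥0∞)⁻¹ ^ (e + 2)) * 2⁻¹ ^ e ≤ 2⁻¹ ^ e :=
    mul_le_of_le_one_left zero_le tsub_le_self
  have step2 : (2 : ℝ≥0∞)⁻¹ ^ e = 4 * 2⁻¹ ^ (e + 2) := by
    rw [pow_add, ← mul_assoc, mul_comm (4 : ℝ≥0∞), mul_assoc, four_q_sq, mul_one]
  have step3 : (4 : ℝ≥0∞) * 2⁻¹ ^ (e + 2) ≤ 8 * (2⁻¹ ^ (e + 2) * (1 - 2⁻¹ ^ e)) := by
    calc (4 : ℝ≥0∞) * 2⁻¹ ^ (e + 2) = 8 * (2⁻¹ ^ (e + 2) * 2⁻¹) := by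
          rw [mul_comm ((2:ℝ≥0∞)⁻¹ ^ (e+2)) 2⁻¹, ← mul_assoc, eight_half]
      _ ≤ 8 * (2⁻¹ ^ (e + 2) * (1 - 2⁻¹ ^ e)) :=
          mul_le_mul_right (mul_le_mul_right (half_le_one_sub_q_pow he) _) _
  exact step1.trans (step2 ▸ step3)

lemma cross_div {a b a' b' D1 D2 : ℝ≥0∞} (h : a * b ≤ 8 * (a' * b')) :
    a / D1 * (b / D2) ≤ 8 * (a' / D1 * (b' / D2)) := by
  simp only [div_eq_mul_inv]
  calc a * D1⁻¹ * (b * D2⁻¹) = a * b * (D1⁻¹ * D2⁻¹) := by ring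
    _ ≤ 8 * (a' * b') * (D1⁻¹ * D2⁻¹) := mul_le_mul_left h _
    _ = 8 * (a' * D1⁻¹ * (b' * D2⁻¹)) := by ring

/-- Key distortion bound: the product of the weights of the first `n` digits grows by
a factor of at most `8` under the odometer. -/
lemma w_step (n : ℕ) (x : OdoX) :
    ∏ j ∈ Finset.range n, odoW j (x j) ≤ 8 * ∏ j ∈ Finset.range n, odoW j (odoMap x j) := by
  classical
  by_cases hall : ∀ j, j < n → (x j : ℕ) = odoSize j - 1
  · have hpt : ∀ j ∈ Finset.range n, odoW j (x j) ≤ odoW j (odoMap x j) := fun j hj =>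
      w_max_le_w0 j (hall j (Finset.mem_range.mp hj))
        (odoMap_val_lt (i0 := n) hall (Finset.mem_range.mp hj))
    exact (Finset.prod_le_prod' hpt).trans
      (le_mul_of_one_le_left zero_le (by norm_num))
  · obtain ⟨i0, hi0n, hne, hmin⟩ := exists_min_nonmax hall
    have hsplit : ∀ y : OdoX, ∏ j ∈ Finset.range n, odoW j (y j)
        = (∏ j ∈ Finset.range (i0 + 1), odoW j (y j)) *
          ∏ j ∈ Finset.Ico (i0 + 1) n, odoW j (y j) := fun y => by
      rw [Finset.range_eq_Ico,
        ← Finset.prod_Ico_consecutive (fun j => odoW j (y j)) (Nat.zero_le _)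
          (by omega : i0 + 1 ≤ n), ← Finset.range_eq_Ico]
    have htail : ∏ j ∈ Finset.Ico (i0 + 1) n, odoW j (odoMap x j)
        = ∏ j ∈ Finset.Ico (i0 + 1) n, odoW j (x j) :=
      Finset.prod_congr rfl fun j hj => by rw [odoMap_eq_gt hne (Finset.mem_Ico.mp hj).1]
    have hhead : ∏ j ∈ Finset.range (i0 + 1), odoW j (x j)
        ≤ 8 * ∏ j ∈ Finset.range (i0 + 1), odoW j (odoMap x j) := by
      by_cases hw : odoW i0 (x i0) ≤ odoW i0 (odoMap x i0)
      · have hpt : ∀ j ∈ Finset.range (i0 + 1), odoW j (x j) ≤ odoW j (odoMap x j) := by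
          intro j hj
          rcases Nat.lt_succ_iff_lt_or_eq.mp (Finset.mem_range.mp hj) with hj' | rfl
          · exact w_max_le_w0 j (hmin j hj') (odoMap_val_lt hmin hj')
          · exact hw
        exact (Finset.prod_le_prod' hpt).trans
          (le_mul_of_one_le_left zero_le (by norm_num))
      · have hfival : ((odoMap x i0 : ℕ)) = (x i0 : ℕ) + 1 := odoMap_val_at hne hmin
        have hodd : ¬(i0 + 1) % 2 = 0 := by
          intro h
          exact hw (by rw [odoW_even h, odoW_even h])
        have hxlt : (x i0 : ℕ) < i0 + 1 := by
          by_contra hge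
          push_neg at hge
          exact hw (by rw [odoW_odd_ge hodd (by omega), odoW_odd_ge hodd (by omega)])
        have hfge : ¬((x i0 : ℕ) + 1 < i0 + 1) := by
          intro hlt2
          exact hw (by
            rw [odoW_odd_lt hodd hxlt, odoW_odd_lt hodd (by rw [hfival]; exact hlt2)])
        have hi02 : 2 ≤ i0 := by
          rcases i0 with _ | _ | i0'
          · exfalso
            apply hw
            rw [odoW_odd_lt hodd hxlt, odoW_odd_ge hodd (by rw [hfival]; omega)]
            rw [pow_one, ENNReal.one_sub_inv_two]
          · exact absurd rfl hodd
          · omega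
        set c := i0 - 2 with hc
        have hcodd : ¬(c + 1) % 2 = 0 := by omega
        have hxc : (x c : ℕ) = odoSize c - 1 := hmin c (by omega)
        have hcsize : odoSize c = 2 * c + 2 := by unfold odoSize; rw [if_neg hcodd]
        have hxcge : ¬((x c : ℕ) < c + 1) := by omega
        have hfc0 : ((odoMap x c : ℕ)) = 0 := odoMap_val_lt hmin (by omega)
        have hpair : odoW c (x c) * odoW i0 (x i0)
            ≤ 8 * (odoW c (odoMap x c) * odoW i0 (odoMap x i0)) := by
          rw [odoW_odd_ge hcodd hxcge, odoW_odd_lt hodd hxlt,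
            odoW_odd_lt hcodd (by rw [hfc0]; omega),
            odoW_odd_ge hodd (by rw [hfival]; omega)]
          have hee : i0 + 1 = (c + 1) + 2 := by omega
          rw [hee]
          apply cross_div
          calc (2:ℝ≥0∞)⁻¹ ^ (c + 1) * (1 - 2⁻¹ ^ (c + 1 + 2))
              = (1 - 2⁻¹ ^ (c + 1 + 2)) * 2⁻¹ ^ (c + 1) := mul_comm _ _
            _ ≤ 8 * (2⁻¹ ^ (c + 1 + 2) * (1 - 2⁻¹ ^ (c + 1))) := cross_num (c + 1) (by omega)
            _ = 8 * ((1 - 2⁻¹ ^ (c + 1)) * 2⁻¹ ^ (c + 1 + 2)) := by rw [mul_comm ((2:ℝ≥0∞)⁻¹ ^ (c+1+2))]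
        have hsub : ({c, i0} : Finset ℕ) ⊆ Finset.range (i0 + 1) := by
          intro t ht
          simp only [Finset.mem_insert, Finset.mem_singleton] at ht
          rcases ht with rfl | rfl <;> simp [Finset.mem_range] <;> omega
        have hne_ci : c ≠ i0 := by omega
        have hrest : ∀ j ∈ Finset.range (i0 + 1) \ {c, i0},
            odoW j (x j) ≤ odoW j (odoMap x j) := by
          intro j hj
          simp only [Finset.mem_sdiff, Finset.mem_range, Finset.mem_insert,
            Finset.mem_singleton] at hj
          have hj' : j < i0 := by omega
          exact w_max_le_w0 j (hmin j hj') (odoMap_val_lt hmin hj')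
        calc ∏ j ∈ Finset.range (i0 + 1), odoW j (x j)
            = (∏ j ∈ Finset.range (i0 + 1) \ {c, i0}, odoW j (x j)) *
              ∏ j ∈ ({c, i0} : Finset ℕ), odoW j (x j) := (Finset.prod_sdiff hsub).symm
          _ = (∏ j ∈ Finset.range (i0 + 1) \ {c, i0}, odoW j (x j)) *
              (odoW c (x c) * odoW i0 (x i0)) := by rw [Finset.prod_pair hne_ci]
          _ ≤ (∏ j ∈ Finset.range (i0 + 1) \ {c, i0}, odoW j (odoMap x j)) *
              (8 * (odoW c (odoMap x c) * odoW i0 (odoMap x i0))) :=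
            mul_le_mul' (Finset.prod_le_prod' hrest) hpair
          _ = 8 * ((∏ j ∈ Finset.range (i0 + 1) \ {c, i0}, odoW j (odoMap x j)) *
              ∏ j ∈ ({c, i0} : Finset ℕ), odoW j (odoMap x j)) := by
            rw [Finset.prod_pair hne_ci]; ring
          _ = 8 * ∏ j ∈ Finset.range (i0 + 1), odoW j (odoMap x j) := by
            rw [Finset.prod_sdiff hsub]
    calc ∏ j ∈ Finset.range n, odoW j (x j)
        = (∏ j ∈ Finset.range (i0 + 1), odoW j (x j)) *
          ∏ j ∈ Finset.Ico (i0 + 1) n, odoW j (x j) := hsplit x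
      _ ≤ (8 * ∏ j ∈ Finset.range (i0 + 1), odoW j (odoMap x j)) *
          ∏ j ∈ Finset.Ico (i0 + 1) n, odoW j (x j) := mul_le_mul_left hhead _
      _ = 8 * ((∏ j ∈ Finset.range (i0 + 1), odoW j (odoMap x j)) *
          ∏ j ∈ Finset.Ico (i0 + 1) n, odoW j (odoMap x j)) := by rw [htail]; ring
      _ = 8 * ∏ j ∈ Finset.range n, odoW j (odoMap x j) := by rw [← hsplit (odoMap x)]


/-! ### Measure-theoretic part -/

lemma measurable_proj (n : ℕ) : Measurable (proj n) :=
  measurable_pi_lambda _ fun j => measurable_pi_apply _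

lemma measurableSet_cylSet (n : ℕ) (S : Set (Tup n)) : MeasurableSet (cylSet n S) :=
  measurable_proj n ((Set.to_countable S).measurableSet)

lemma measurable_odoMap : Measurable odoMap := by
  apply measurable_pi_lambda
  intro i
  simp only [odoMap]
  have hcond : MeasurableSet {x : OdoX | ∀ j, j < i → ((x j : ℕ) = odoSize j - 1)} := by
    have heq : {x : OdoX | ∀ j, j < i → ((x j : ℕ) = odoSize j - 1)}
        = ⋂ j ∈ Finset.range i, (fun x : OdoX => x j) ⁻¹' {k | (k : ℕ) = odoSize j - 1} := by
      ext x
      simp [Finset.mem_range]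
    rw [heq]
    exact MeasurableSet.biInter (Finset.range i).countable_toSet
      (fun j _ => (measurable_pi_apply j) ((Set.to_countable _).measurableSet))
  exact Measurable.ite hcond
    ((measurable_of_countable (fun k : Fin (odoSize i) => k + 1)).comp (measurable_pi_apply i))
    (measurable_pi_apply i)

/-- The algebra of sets determined by finitely many coordinates. -/
def Alg : Set (Set OdoX) := {U | ∃ n S, U = cylSet n S}

lemma cylSet_mono {n m : ℕ} (h : n ≤ m) (S : Set (Tup n)) :
    ∃ S' : Set (Tup m), cylSet n S = cylSet m S' :=
  ⟨(fun (t : Tup m) (j : Fin n) => t (Fin.castLE h j)) ⁻¹' S, rfl⟩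

lemma isSetAlgebra_Alg : IsSetAlgebra Alg where
  empty_mem := ⟨0, ∅, by simp [cylSet]⟩
  compl_mem := fun s hs => by
    obtain ⟨n, S, rfl⟩ := hs
    exact ⟨n, Sᶜ, rfl⟩
  union_mem := fun s t hs ht => by
    obtain ⟨n, S, rfl⟩ := hs
    obtain ⟨m, S', rfl⟩ := ht
    obtain ⟨S2, h2⟩ := cylSet_mono (le_max_left n m) S
    obtain ⟨S3, h3⟩ := cylSet_mono (le_max_right n m) S'
    exact ⟨max n m, S2 ∪ S3, by rw [h2, h3]; rfl⟩

lemma gen_Alg : (inferInstance : MeasurableSpace OdoX) = MeasurableSpace.generateFrom Alg := by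
  apply le_antisymm
  · have h_i : ∀ i, @Measurable OdoX (Fin (odoSize i))
        (MeasurableSpace.generateFrom Alg) _ (fun x => x i) := by
      intro i
      refine @measurable_to_countable' (Fin (odoSize i)) OdoX _ _
        (MeasurableSpace.generateFrom Alg) _ (fun k => ?_)
      exact MeasurableSpace.measurableSet_generateFrom
        ⟨i + 1, {t : Tup (i + 1) | t ⟨i, Nat.lt_succ_self i⟩ = k}, rfl⟩
    exact iSup_le fun i => measurable_iff_comap_le.mp (h_i i)
  · exact MeasurableSpace.generateFrom_le (fun t ht => by
      obtain ⟨n, S, rfl⟩ := ht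
      exact measurableSet_cylSet n S)

section Meas

variable {μ : Measure OdoX}

def Hmu (μ : Measure OdoX) : Prop := ∀ (n : ℕ) (a : ∀ j : Fin n, Fin (odoSize j)),
  μ {x : OdoX | ∀ j : Fin n, x j = a j} = ∏ j : Fin n, odoW j (a j)

lemma μ_univ (hμ : Hmu μ) : μ Set.univ = 1 := by
  have h := hμ 0 (fun j => j.elim0)
  simpa using h

lemma μ_cyl (hμ : Hmu μ) (n : ℕ) (a : Tup n) :
    μ (cylSet n {a}) = ∏ j : Fin n, odoW j (a j) := by
  rw [← setOf_eq_cylSet, hμ]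

lemma cylSet_biUnion (n : ℕ) (S : Set (Tup n)) :
    cylSet n S = ⋃ a ∈ (Set.toFinite S).toFinset, cylSet n {a} := by
  ext x
  simp [cylSet, Set.Finite.mem_toFinset]

lemma disj_cyl {n : ℕ} {a b : Tup n} (hab : a ≠ b) :
    Disjoint (cylSet n {a}) (cylSet n {b}) := by
  apply Set.disjoint_left.mpr
  intro x hxa hxb
  exact hab ((mem_cylSet_singleton.mp hxa) ▸ (mem_cylSet_singleton.mp hxb) ▸ rfl)

lemma μ_cylSet (hμ : Hmu μ) (n : ℕ) (S : Set (Tup n)) :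
    μ (cylSet n S) = ∑ a ∈ (Set.toFinite S).toFinset, μ (cylSet n {a}) := by
  rw [cylSet_biUnion n S]
  exact measure_biUnion_finset
    (fun a _ b _ hab => disj_cyl hab)
    (fun a _ => measurableSet_cylSet n {a})

lemma μ_preimage_cyl_le (hμ : Hmu μ) (n : ℕ) (a : Tup n) :
    μ (odoMap ⁻¹' cylSet n {a}) ≤ 8 * μ (cylSet n {a}) := by
  obtain ⟨z, hza, hpre⟩ := preimage_cyl n a
  rw [hpre, μ_cyl hμ, ← hza, μ_cyl hμ]
  have h1 : (∏ j : Fin n, odoW j ((proj n z) j)) = ∏ j ∈ Finset.range n, odoW j (z j) :=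
    Fin.prod_univ_eq_prod_range (fun j => odoW j (z j)) n
  have h2 : (∏ j : Fin n, odoW j ((proj n (odoMap z)) j))
      = ∏ j ∈ Finset.range n, odoW j (odoMap z j) :=
    Fin.prod_univ_eq_prod_range (fun j => odoW j (odoMap z j)) n
  rw [h1, h2]
  exact w_step n z

lemma μ_preimage_Alg_le (hμ : Hmu μ) {U : Set OdoX} (hU : U ∈ Alg) :
    μ (odoMap ⁻¹' U) ≤ 8 * μ U := by
  obtain ⟨n, S, rfl⟩ := hU
  have hdec : odoMap ⁻¹' cylSet n S
      = ⋃ a ∈ (Set.toFinite S).toFinset, odoMap ⁻¹' cylSet n {a} := by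
    rw [cylSet_biUnion n S]
    simp [Set.preimage_iUnion]
  rw [hdec, measure_biUnion_finset
    (fun a _ b _ hab => Disjoint.preimage odoMap (disj_cyl hab))
    (fun a _ => measurable_odoMap (measurableSet_cylSet n {a})),
    μ_cylSet hμ n S, Finset.mul_sum]
  exact Finset.sum_le_sum (fun a _ => μ_preimage_cyl_le hμ n a)

lemma μ_preimage_le (hμ : Hmu μ) {B : Set OdoX} (hB : MeasurableSet B) :
    μ (odoMap ⁻¹' B) ≤ 8 * μ B := by
  haveI : IsProbabilityMeasure μ := ⟨μ_univ hμ⟩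
  set ν := Measure.map odoMap μ with hν
  have hνap : ∀ s : Set OdoX, MeasurableSet s → ν s = μ (odoMap ⁻¹' s) := fun s hs =>
    Measure.map_apply measurable_odoMap hs
  have hmd : (μ + ν).MeasureDense Alg :=
    Measure.MeasureDense.of_generateFrom_isSetAlgebra_finite (μ + ν) isSetAlgebra_Alg gen_Alg
  rw [← hνap B hB]
  refine ENNReal.le_of_forall_pos_le_add fun ε hε h8 => ?_
  have hδ : (0 : ℝ) < (ε : ℝ) / 9 := by positivity
  obtain ⟨t, ht, hst⟩ := hmd.approx B hB (measure_ne_top _ _) _ hδ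
  set e := ENNReal.ofReal ((ε : ℝ) / 9) with he
  have htm : MeasurableSet t := by
    obtain ⟨n, S, rfl⟩ := ht
    exact measurableSet_cylSet n S
  have hμΔ : μ (B ∆ t) ≤ e := by
    refine le_trans ?_ hst.le
    rw [Measure.add_apply]
    exact self_le_add_right _ _
  have hνΔ : ν (B ∆ t) ≤ e := by
    refine le_trans ?_ hst.le
    rw [Measure.add_apply]
    exact self_le_add_left _ _
  have h1 : ν B ≤ ν t + e := by
    calc ν B ≤ ν (t ∪ B ∆ t) := measure_mono (fun x hx => by
          by_cases hxt : x ∈ t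
          · exact Or.inl hxt
          · exact Or.inr (Or.inl ⟨hx, hxt⟩))
      _ ≤ ν t + ν (B ∆ t) := measure_union_le _ _
      _ ≤ ν t + e := add_le_add_right hνΔ _
  have h2 : μ t ≤ μ B + e := by
    calc μ t ≤ μ (B ∪ B ∆ t) := measure_mono (fun x hx => by
          by_cases hxB : x ∈ B
          · exact Or.inl hxB
          · exact Or.inr (Or.inr ⟨hx, hxB⟩))
      _ ≤ μ B + μ (B ∆ t) := measure_union_le _ _
      _ ≤ μ B + e := add_le_add_right hμΔ _
  have h3 : ν t ≤ 8 * μ t := by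
    rw [hνap t htm]
    exact μ_preimage_Alg_le hμ ht
  have h9e : 8 * e + e ≤ (ε : ℝ≥0∞) := by
    have h9 : (8 : ℝ≥0∞) * e + e = 9 * e := by ring
    rw [h9, he, show (9 : ℝ≥0∞) = ENNReal.ofReal 9 by simp,
      ← ENNReal.ofReal_mul (by norm_num)]
    rw [show (9 : ℝ) * ((ε : ℝ) / 9) = (ε : ℝ) by ring]
    exact le_of_eq (ENNReal.ofReal_coe_nnreal)
  calc ν B ≤ ν t + e := h1
    _ ≤ 8 * μ t + e := add_le_add_left h3 _
    _ ≤ 8 * (μ B + e) + e := add_le_add_left (mul_le_mul_right h2 _) _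
    _ = 8 * μ B + (8 * e + e) := by ring
    _ ≤ 8 * μ B + ε := add_le_add_right h9e _

lemma null_preimage (hμ : Hmu μ) {Z : Set OdoX} (hZ : μ Z = 0) : μ (odoMap ⁻¹' Z) = 0 := by
  obtain ⟨Z', hsub, hm', h0'⟩ := exists_measurable_superset_of_null hZ
  refine le_antisymm ?_ zero_le
  calc μ (odoMap ⁻¹' Z) ≤ μ (odoMap ⁻¹' Z') := measure_mono (preimage_mono hsub)
    _ ≤ 8 * μ Z' := μ_preimage_le hμ hm'
    _ = 0 := by rw [h0', mul_zero]

lemma comp_ae (hμ : Hmu μ) {g h : OdoX → ℝ} (hgh : g =ᵐ[μ] h) :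
    (fun x => g (odoMap x)) =ᵐ[μ] fun x => h (odoMap x) := by
  have h0 : μ {x | ¬ g x = h x} = 0 := ae_iff.mp hgh
  apply ae_iff.mpr
  refine le_antisymm (le_trans (measure_mono ?_) (null_preimage hμ h0).le) zero_le
  exact fun x hx => hx

end Meas


/-! ### The composition operator -/

section Op

variable {μ : Measure OdoX} [IsFiniteMeasure μ] {p : ℝ≥0∞} [Fact (1 ≤ p)]
variable {T : Lp ℝ p μ →L[ℝ] Lp ℝ p μ}

lemma ind_congr {V W : Set OdoX} (hVW : V = W) (hV : MeasurableSet V) (hW : MeasurableSet W)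
    (c : ℝ) :
    indicatorConstLp p hV (measure_ne_top μ V) c
      = indicatorConstLp p hW (measure_ne_top μ W) c := by
  subst hVW; rfl

lemma T_ind (hμ : Hmu μ)
    (hT : ∀ φ : Lp ℝ p μ, (T φ : OdoX → ℝ) =ᵐ[μ] fun x => (φ : OdoX → ℝ) (odoMap x))
    (c : ℝ) {V : Set OdoX} (hV : MeasurableSet V) :
    T (indicatorConstLp p hV (measure_ne_top μ V) c)
      = indicatorConstLp p (hV.preimage measurable_odoMap) (measure_ne_top μ _) c := by
  apply Lp.ext
  have h1 := hT (indicatorConstLp p hV (measure_ne_top μ V) c)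
  have h2 : (fun x => (indicatorConstLp p hV (measure_ne_top μ V) c : OdoX → ℝ) (odoMap x))
      =ᵐ[μ] fun x => Set.indicator V (fun _ => c) (odoMap x) :=
    comp_ae hμ indicatorConstLp_coeFn
  have h3 : (fun x => Set.indicator V (fun _ => c) (odoMap x))
      = Set.indicator (odoMap ⁻¹' V) (fun _ => c) := by
    funext x
    exact (Set.indicator_comp_right odoMap).symm
  refine h1.trans (h2.trans ?_)
  rw [h3]
  exact (indicatorConstLp_coeFn).symm

lemma T_pow_ind (hμ : Hmu μ)
    (hT : ∀ φ : Lp ℝ p μ, (T φ : OdoX → ℝ) =ᵐ[μ] fun x => (φ : OdoX → ℝ) (odoMap x))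
    (c : ℝ) (k : ℕ) {V : Set OdoX} (hV : MeasurableSet V) :
    (T ^ k) (indicatorConstLp p hV (measure_ne_top μ V) c)
      = indicatorConstLp p (hV.preimage (measurable_odoMap.iterate k)) (measure_ne_top μ _) c := by
  induction k with
  | zero =>
    rw [pow_zero, ContinuousLinearMap.one_apply]
    rfl
  | succ k ih =>
    rw [pow_succ', ContinuousLinearMap.mul_apply, ih, T_ind hμ hT c]
    rfl

lemma pow_fix {N : ℕ} {φ : Lp ℝ p μ} (h : (T ^ N) φ = φ) (M : ℕ) : (T ^ (N * M)) φ = φ := by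
  induction M with
  | zero => simp
  | succ M ih => rw [Nat.mul_succ, pow_add, ContinuousLinearMap.mul_apply, h, ih]

variable (T) in
/-- The periodic points of `T`. -/
def PerMod : Submodule ℝ (Lp ℝ p μ) where
  carrier := {φ : Lp ℝ p μ | ∃ N : ℕ, 1 ≤ N ∧ (T ^ N) φ = φ}
  zero_mem' := ⟨1, le_rfl, by rw [pow_one, map_zero]⟩
  add_mem' := by
    rintro φ χ ⟨N, hN, hφ⟩ ⟨M, hM, hχ⟩
    refine ⟨N * M, Nat.one_le_iff_ne_zero.mpr (by positivity), ?_⟩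
    rw [map_add, pow_fix hφ M, mul_comm, pow_fix hχ N]
  smul_mem' := by
    rintro c φ ⟨N, hN, hφ⟩
    exact ⟨N, hN, by rw [(T ^ N).map_smul, hφ]⟩

lemma dense_per (hμ : Hmu μ) (hp : p ≠ ⊤)
    (hT : ∀ φ : Lp ℝ p μ, (T φ : OdoX → ℝ) =ᵐ[μ] fun x => (φ : OdoX → ℝ) (odoMap x)) :
    Dense {φ : Lp ℝ p μ | ∃ N : ℕ, 1 ≤ N ∧ (T ^ N) φ = φ} := by
  haveI : Fact (p ≠ ⊤) := ⟨hp⟩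
  have hcylper : ∀ (c : ℝ) (n : ℕ) (S : Set (Tup n)),
      indicatorConstLp p (measurableSet_cylSet n S) (measure_ne_top μ _) c
        ∈ PerMod T := by
    intro c n S
    refine ⟨P n, by have := P_pos n; omega, ?_⟩
    rw [T_pow_ind hμ hT c (P n) (measurableSet_cylSet n S)]
    exact ind_congr (preimage_iter_P n S) _ _ c
  have hmd : μ.MeasureDense Alg :=
    Measure.MeasureDense.of_generateFrom_isSetAlgebra_finite μ isSetAlgebra_Alg gen_Alg
  have happrox : ∀ (c : ℝ) {s : Set OdoX} (hs : MeasurableSet s) (hμs : μ s ≠ ⊤),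
      indicatorConstLp p hs hμs c ∈ (PerMod T).topologicalClosure := by
    intro c s hs hμs
    have hmem := hmd.indicatorConstLp_subset_closure p c ⟨s, hs, hμs, rfl⟩
    have hsub : {φ : Lp ℝ p μ | ∃ (t : Set OdoX) (ht : t ∈ Alg) (hμt : μ t ≠ ⊤),
        indicatorConstLp p (hmd.measurable t ht) hμt c = φ} ⊆ (PerMod T : Set (Lp ℝ p μ)) := by
      rintro - ⟨t, ht, hμt, rfl⟩
      obtain ⟨n, S, rfl⟩ := ht
      exact hcylper c n S
    have h2 : closure {φ : Lp ℝ p μ | ∃ (t : Set OdoX) (ht : t ∈ Alg) (hμt : μ t ≠ ⊤),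
        indicatorConstLp p (hmd.measurable t ht) hμt c = φ}
        ⊆ closure (PerMod T : Set (Lp ℝ p μ)) := closure_mono hsub
    have h3 := h2 hmem
    rwa [← Submodule.topologicalClosure_coe] at h3
  have hall : ∀ f : Lp ℝ p μ, f ∈ (PerMod T).topologicalClosure := by
    refine Lp.induction hp (fun f => f ∈ (PerMod T).topologicalClosure) ?_ ?_ ?_
    · intro c s hs hμs
      rw [Lp.simpleFunc.coe_indicatorConst]
      exact happrox c hs hμs.ne
    · intro f g hf hg hdisj hPf hPg
      exact Submodule.add_mem _ hPf hPg
    · exact (PerMod T).isClosed_topologicalClosure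
  intro φ
  show φ ∈ closure ((PerMod T : Set (Lp ℝ p μ)))
  rw [← Submodule.topologicalClosure_coe]
  exact hall φ

end Op

end Odo19


/-- For the odometer `f` on `X = ∏ A_i` with the product measure `μ`
determined by the weights `odoW`, every basic cylinder `C = [a₁,…,a_n]` satisfies
`f^{−N}(C) = C` with `N = |A₁|⋯|A_n|`, its indicator is (represented by) a periodic point
of `T_f`, and `T_f` has a dense set of periodic points. -/
theorem stmt_19 (μ : Measure OdoX)
    (hμ : ∀ (n : ℕ) (a : ∀ j : Fin n, Fin (odoSize j)),
      μ {x : OdoX | ∀ j : Fin n, x j = a j} = ∏ j : Fin n, odoW j (a j))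
    (p : ℝ≥0∞) [Fact (1 ≤ p)] (hp : p ≠ ⊤)
    (T : Lp ℝ p μ →L[ℝ] Lp ℝ p μ)
    (hT : ∀ φ : Lp ℝ p μ, (T φ : OdoX → ℝ) =ᵐ[μ] fun x => (φ : OdoX → ℝ) (odoMap x)) :
    (∀ (n : ℕ) (a : ∀ j : Fin n, Fin (odoSize j)),
      odoMap^[∏ j : Fin n, odoSize j] ⁻¹' {x : OdoX | ∀ j : Fin n, x j = a j}
          = {x : OdoX | ∀ j : Fin n, x j = a j} ∧
      ∃ ψ : Lp ℝ p μ,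
        ((ψ : OdoX → ℝ) =ᵐ[μ]
          Set.indicator {x : OdoX | ∀ j : Fin n, x j = a j} fun _ => (1 : ℝ)) ∧
        1 ≤ (∏ j : Fin n, odoSize (j : ℕ)) ∧
        (T ^ (∏ j : Fin n, odoSize (j : ℕ))) ψ = ψ) ∧
    Dense {φ : Lp ℝ p μ | ∃ N : ℕ, 1 ≤ N ∧ (T ^ N) φ = φ} := by
  haveI : IsProbabilityMeasure μ := ⟨Odo19.μ_univ hμ⟩
  constructor
  · intro n a
    have hNP : (∏ j : Fin n, odoSize (j : ℕ)) = Odo19.P n :=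
      Fin.prod_univ_eq_prod_range odoSize n
    refine ⟨?_, ?_⟩
    · rw [Odo19.setOf_eq_cylSet n a, hNP]
      exact Odo19.preimage_iter_P n {a}
    · refine ⟨indicatorConstLp p (Odo19.measurableSet_cylSet n {a}) (measure_ne_top μ _) 1,
        ?_, ?_, ?_⟩
      · rw [Odo19.setOf_eq_cylSet n a]
        exact indicatorConstLp_coeFn
      · rw [hNP]
        have := Odo19.P_pos n
        omega
      · rw [hNP, Odo19.T_pow_ind hμ hT 1 (Odo19.P n) (Odo19.measurableSet_cylSet n {a})]
        exact Odo19.ind_congr (Odo19.preimage_iter_P n {a}) _ _ 1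
  · exact Odo19.dense_per hμ hp hT
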